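/- For any m×m matrix A over a commutative ring, pf^(α)(ω(A)) = det^(α)(A), where ω(A) is the 2m×2m skew-symmetric matrix whose (r,s)-block is [[0, a_{rs}],[-a_{sr}, 0]]. -/

import Mathlib

open Matrix
open scoped Classical

variable {R : Type*} [CommRing R]

/-- The `(i,j)` entry (indices in `ZMod 2`) of the `2 × 2` block `B(r,s)` of `B`. -/
def Bblk {m : ℕ} (B : Matrix (Fin (2 * m)) (Fin (2 * m)) R) (r s : Fin m)
    (i j : ZMod 2) : R :=
  B ⟨2 * r.val + i.val, by have := r.isLt; have := ZMod.val_lt i; omega⟩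
    ⟨2 * s.val + j.val, by have := s.isLt; have := ZMod.val_lt j; omega⟩

/-- `Q(B)(τ)` for the cycle `τ = (k 0, …, k (r-1))` (with `k 0` minimal):
the sum over `i : Fin r → ZMod 2` with `i 0 = 0`; for `r = 1` it is
`B₀₁(k 0, k 0)`. -/
noncomputable def Qcyc {m r : ℕ} [NeZero r] (B : Matrix (Fin (2 * m)) (Fin (2 * m)) R)
    (k : Fin r → Fin m) : R :=
  ∑ i ∈ Finset.univ.filter (fun i : Fin r → ZMod 2 => i 0 = 0),
    (∏ j, (-1 : R) ^ (i j).val) * ∏ j, Bblk B (k j) (k (j + 1)) (i j) (i (j + 1) + 1)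

/-- The set of minimal representatives of the cycles (orbits) of `σ`. -/
noncomputable def reps {m : ℕ} (σ : Equiv.Perm (Fin m)) : Finset (Fin m) :=
  Finset.univ.filter fun x => ∀ n : ℕ, x ≤ (σ ^ n) x

/-- The number of cycles (orbits, including fixed points) of `σ`. -/
noncomputable def nu {m : ℕ} (σ : Equiv.Perm (Fin m)) : ℕ := (reps σ).card

/-- The length of the cycle of `σ` through `x`. -/
noncomputable def cycLen {m : ℕ} (σ : Equiv.Perm (Fin m)) (x : Fin m) : ℕ :=
  orderOf (σ.cycleOf x)

/-- The α-pfaffian `pf^(α)(B) = ∑_σ α^{m-ν(σ)} ∏ⱼ Q(B)(σ⁽ʲ⁾)`, the product being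
over the cycles of `σ`, each starting at its minimal element. -/
noncomputable def apf {m : ℕ} (α : R) (B : Matrix (Fin (2 * m)) (Fin (2 * m)) R) : R :=
  ∑ σ : Equiv.Perm (Fin m), α ^ (m - nu σ) *
    ∏ x ∈ reps σ,
      haveI : NeZero (cycLen σ x) := ⟨(orderOf_pos _).ne'⟩
      Qcyc B (fun j : Fin (cycLen σ x) => (σ ^ (j : ℕ)) x)

/-- The α-determinant `det^(α)(A) = ∑_σ α^{m-ν(σ)} ∏ᵢ a_{i σ(i)}`. -/
noncomputable def adet {m : ℕ} (α : R) (A : Matrix (Fin m) (Fin m) R) : R :=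
  ∑ σ : Equiv.Perm (Fin m), α ^ (m - nu σ) * ∏ i, A i (σ i)

/-- The skew-symmetric matrix `ω(A)` whose `(r,s)` block is `[[0, a_{rs}],[-a_{sr}, 0]]`. -/
def omegaMat {m : ℕ} (A : Matrix (Fin m) (Fin m) R) :
    Matrix (Fin (2 * m)) (Fin (2 * m)) R := fun i j =>
  have hi : i.val / 2 < m := by have := i.isLt; omega
  have hj : j.val / 2 < m := by have := j.isLt; omega
  if i.val % 2 = 0 ∧ j.val % 2 = 1 then A ⟨i.val / 2, hi⟩ ⟨j.val / 2, hj⟩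
  else if i.val % 2 = 1 ∧ j.val % 2 = 0 then -A ⟨j.val / 2, hj⟩ ⟨i.val / 2, hi⟩
  else 0


theorem mem_reps {m : ℕ} {σ : Equiv.Perm (Fin m)} {x : Fin m} :
    x ∈ reps σ ↔ ∀ n : ℕ, x ≤ (σ ^ n) x := by simp [reps]

theorem pow_apply_inj {m : ℕ} (σ : Equiv.Perm (Fin m)) (x : Fin m) {a b : ℕ}
    (ha : a < cycLen σ x) (hb : b < cycLen σ x)
    (h : (σ ^ a) x = (σ ^ b) x) : a = b := by
  unfold cycLen at ha hb
  by_cases hx : σ x = x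
  · have h1 : σ.cycleOf x = 1 := by rwa [Equiv.Perm.cycleOf_eq_one_iff]
    rw [h1, orderOf_one] at ha hb; omega
  · have hc := Equiv.Perm.isCycle_cycleOf σ hx
    have hco := hc.orderOf
    have hcyc := Equiv.Perm.isCycleOn_support_cycleOf σ x
    have hxmem : x ∈ (σ.cycleOf x).support := by
      rw [Equiv.Perm.mem_support_cycleOf_iff]
      exact ⟨Equiv.Perm.SameCycle.refl _ _, by simpa using hx⟩
    have := (hcyc.pow_apply_eq_pow_apply hxmem (m := a) (n := b)).mp h
    rw [← hco] at this
    exact this.eq_of_lt_of_lt ha hb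

theorem rep_unique {m : ℕ} {σ : Equiv.Perm (Fin m)} {x x' : Fin m}
    (hx : x ∈ reps σ) (hx' : x' ∈ reps σ) (h : σ.SameCycle x x') : x = x' := by
  obtain ⟨n, _, hn⟩ := h.exists_pow_eq'
  obtain ⟨n', _, hn'⟩ := h.symm.exists_pow_eq'
  exact le_antisymm (hn ▸ mem_reps.mp hx n) (hn' ▸ mem_reps.mp hx' n')

theorem exists_rep {m : ℕ} (σ : Equiv.Perm (Fin m)) (i : Fin m) :
    ∃ x ∈ reps σ, ∃ j : Fin (cycLen σ x), (σ ^ (j : ℕ)) x = i := by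
  set S := Finset.univ.filter (σ.SameCycle i) with hS
  have hne : S.Nonempty := ⟨i, by simp [hS, Equiv.Perm.SameCycle.refl]⟩
  set x := S.min' hne with hxdef
  have hxS : σ.SameCycle i x := by
    have := S.min'_mem hne; simpa [hS] using this
  have hxreps : x ∈ reps σ := by
    rw [mem_reps]
    intro n
    apply S.min'_le
    simp only [hS, Finset.mem_filter, Finset.mem_univ, true_and]
    exact hxS.trans ⟨(n : ℤ), by simp⟩
  obtain ⟨n, hn, hni⟩ := hxS.symm.exists_pow_eq'
  have hpos : 0 < cycLen σ x := orderOf_pos _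
  refine ⟨x, hxreps, ⟨n % cycLen σ x, Nat.mod_lt _ hpos⟩, ?_⟩
  simpa [cycLen, Equiv.Perm.pow_mod_orderOf_cycleOf_apply] using hni

theorem prod_reps {m : ℕ} (σ : Equiv.Perm (Fin m)) (g : Fin m → R) :
    (∏ x ∈ reps σ, ∏ j : Fin (cycLen σ x), g ((σ ^ (j : ℕ)) x)) = ∏ i, g i := by
  rw [Finset.prod_sigma']
  refine Finset.prod_bij (fun p _ => (σ ^ (p.2 : ℕ)) p.1) (fun _ _ => Finset.mem_univ _)
    ?_ ?_ (fun _ _ => rfl)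
  · rintro ⟨x, j⟩ hp ⟨x', j'⟩ hp' h
    simp only [Finset.mem_sigma] at hp hp'
    dsimp only at h
    have hsc : σ.SameCycle x x' := by
      have h1 : σ.SameCycle x ((σ ^ (j : ℕ)) x) := ⟨(j : ℤ), by simp⟩
      have h2 : σ.SameCycle x' ((σ ^ (j' : ℕ)) x') := ⟨(j' : ℤ), by simp⟩
      rw [← h] at h2
      exact h1.trans h2.symm
    obtain rfl := rep_unique hp.1 hp'.1 hsc
    have := pow_apply_inj σ x j.isLt j'.isLt h
    simp [Fin.ext_iff, this]
  · intro i _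
    obtain ⟨x, hx, j, hj⟩ := exists_rep σ i
    exact ⟨⟨x, j⟩, Finset.mem_sigma.mpr ⟨hx, Finset.mem_univ _⟩, hj⟩

theorem Bblk_omega {m : ℕ} (A : Matrix (Fin m) (Fin m) R) (r s : Fin m) (i j : ZMod 2) :
    Bblk (omegaMat A) r s i j =
      if i = 0 ∧ j = 1 then A r s else if i = 1 ∧ j = 0 then -A s r else 0 := by
  have h2 : ∀ z : ZMod 2, z = 0 ∨ z = 1 := by decide
  have hv0 : (0 : ZMod 2).val = 0 := rfl
  have hv1 : (1 : ZMod 2).val = 1 := rfl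
  have hdiv : ∀ (a c : ℕ), c < 2 → (2 * a + c) / 2 = a := by intro a c h; omega
  have hmod : ∀ (a c : ℕ), c < 2 → (2 * a + c) % 2 = c := by intro a c h; omega
  rcases h2 i with rfl | rfl <;> rcases h2 j with rfl | rfl <;>
    simp [Bblk, omegaMat, hv0, hv1, hdiv, hmod, Fin.ext_iff]

theorem Qcyc_omega {m r : ℕ} [NeZero r] (A : Matrix (Fin m) (Fin m) R) (k : Fin r → Fin m) :
    Qcyc (omegaMat A) k = ∏ j, A (k j) (k (j + 1)) := by
  unfold Qcyc
  rw [Finset.sum_eq_single_of_mem (fun _ => (0 : ZMod 2)) (by simp)]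
  · simp [Bblk_omega]
  · intro i hi hne
    simp only [Finset.mem_filter, Finset.mem_univ, true_and] at hi
    have hex : ∃ j : Fin r, i (j + 1) ≠ i j := by
      by_contra hcon
      push_neg at hcon
      apply hne
      funext j
      rcases j with ⟨n, hn⟩
      induction n with
      | zero => exact hi
      | succ n ih =>
        have hr2 : 2 ≤ r := by
          rcases Nat.lt_or_ge r 2 with h | h
          · interval_cases r <;> omega
          · exact h
        have h1v : (1 : Fin r).val = 1 := by
          rw [Fin.val_one']; exact Nat.mod_eq_of_lt (by omega)
        have hstep : (⟨n + 1, hn⟩ : Fin r) = ⟨n, by omega⟩ + 1 := by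
          apply Fin.ext
          simp [Fin.add_def, h1v, Nat.mod_eq_of_lt hn]
        rw [hstep, hcon ⟨n, by omega⟩, ih]
    obtain ⟨j₀, hj₀⟩ := hex
    have hval : i (j₀ + 1) + 1 = i j₀ := by
      have : ∀ a b : ZMod 2, a ≠ b → b + 1 = a := by decide
      exact this _ _ (Ne.symm hj₀)
    have hz : Bblk (omegaMat A) (k j₀) (k (j₀ + 1)) (i j₀) (i (j₀ + 1) + 1) = 0 := by
      rw [hval, Bblk_omega]
      have h2 : ∀ z : ZMod 2, z = 0 ∨ z = 1 := by decide
      rcases h2 (i j₀) with h | h <;> rw [h] <;> simp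
    exact mul_eq_zero_of_right _ (Finset.prod_eq_zero (Finset.mem_univ j₀) hz)

theorem apf_omega_eq_adet (m : ℕ) (α : R) (A : Matrix (Fin m) (Fin m) R) :
    apf α (omegaMat A) = adet α A := by
  unfold apf adet
  refine Finset.sum_congr rfl fun σ _ => ?_
  congr 1
  rw [← prod_reps σ (fun i => A i (σ i))]
  refine Finset.prod_congr rfl fun x hx => ?_
  haveI : NeZero (cycLen σ x) := ⟨(orderOf_pos _).ne'⟩
  rw [Qcyc_omega]
  refine Finset.prod_congr rfl fun j _ => ?_
  congr 1
  have key : ∀ n : ℕ, (σ ^ (n % cycLen σ x)) x = (σ ^ n) x := fun n =>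
    Equiv.Perm.pow_mod_orderOf_cycleOf_apply σ n x
  have hval : ((j + 1 : Fin (cycLen σ x)) : ℕ) =
      (j.val + 1 % cycLen σ x) % cycLen σ x := by
    simp [Fin.add_def, Fin.val_one']
  have h1 : (j.val + 1 % cycLen σ x) % cycLen σ x = (j.val + 1) % cycLen σ x := by
    conv_rhs => rw [Nat.add_mod, Nat.mod_eq_of_lt j.isLt]
  rw [hval, h1, key, pow_succ']
  rfl
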